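/- arXiv:0902.1249 — 2 statements merged into one kernel-verified Lean document; each statement's English description precedes it below -/
import Mathlib

section
/- For the Möbius boost T_{τ₀}(z) = (cosh(τ₀/2) z + sinh(τ₀/2))/(sinh(τ₀/2) z + cosh(τ₀/2)) on the Poincaré disc, the hyperbolic distance satisfies cosh d_H(z, T_{τ₀}(z)) = 1 + 2 (|z²-1|²/(1-|z|²)²) sinh²(τ₀/2) for every z in the disc. -/
/-- Inverse hyperbolic cosine. -/
noncomputable def arcosh (x : ℝ) : ℝ := Real.log (x + Real.sqrt (x ^ 2 - 1))

/-- The hyperbolic distance on the Poincaré disc, defined by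
`cosh (dH z z') = 1 + 2|z-z'|² / ((1-|z|²)(1-|z'|²))`. -/
noncomputable def dH (z z' : ℂ) : ℝ :=
  arcosh (1 + 2 * ‖z - z'‖ ^ 2 /
    ((1 - ‖z‖ ^ 2) * (1 - ‖z'‖ ^ 2)))

/-- The Möbius boost of parameter `τ` on the Poincaré disc. -/
noncomputable def boost (τ : ℝ) (z : ℂ) : ℂ :=
  ((Real.cosh (τ / 2) : ℂ) * z + (Real.sinh (τ / 2) : ℂ)) /
    ((Real.sinh (τ / 2) : ℂ) * z + (Real.cosh (τ / 2) : ℂ))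

lemma cosh_arcosh {x : ℝ} (hx : 1 ≤ x) : Real.cosh (arcosh x) = x := by
  have h1 : (0:ℝ) ≤ x ^ 2 - 1 := by nlinarith
  have hs : Real.sqrt (x ^ 2 - 1) ^ 2 = x ^ 2 - 1 := Real.sq_sqrt h1
  have hsn : 0 ≤ Real.sqrt (x ^ 2 - 1) := Real.sqrt_nonneg _
  have hpos : 0 < x + Real.sqrt (x ^ 2 - 1) := by nlinarith
  rw [arcosh, Real.cosh_eq, Real.exp_log hpos, Real.exp_neg, Real.exp_log hpos]
  have hne : x + Real.sqrt (x ^ 2 - 1) ≠ 0 := ne_of_gt hpos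
  field_simp
  nlinarith

/-- For the boost `T_{τ₀}`, the hyperbolic distance satisfies
`cosh d_H(z, T_{τ₀}(z)) = 1 + 2 (|z²-1|²/(1-|z|²)²) sinh²(τ₀/2)`. -/
theorem cosh_dH_boost (τ₀ : ℝ) (z : ℂ) (hz : ‖z‖ < 1) :
    Real.cosh (dH z (boost τ₀ z)) =
      1 + 2 * (‖z ^ 2 - 1‖ ^ 2 / (1 - ‖z‖ ^ 2) ^ 2) *
        Real.sinh (τ₀ / 2) ^ 2 := by
  set c : ℝ := Real.cosh (τ₀ / 2) with hc
  set s : ℝ := Real.sinh (τ₀ / 2) with hsdef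
  have hcs : c ^ 2 - s ^ 2 = 1 := by
    have := Real.cosh_sq_sub_sinh_sq (τ₀ / 2); nlinarith [this]
  have hcpos : 0 < c := Real.cosh_pos _
  have habs : |s| < c := by nlinarith [sq_abs s, abs_nonneg s]
  have hzn : 0 ≤ ‖z‖ := norm_nonneg z
  have hd : (s : ℂ) * z + (c : ℂ) ≠ 0 := by
    intro h
    have h2 : (s : ℂ) * z = -(c : ℂ) := by linear_combination h
    have h3 : ‖(s : ℂ) * z‖ = ‖-(c : ℂ)‖ := by rw [h2]
    rw [norm_mul, norm_neg, Complex.norm_real, Complex.norm_real, Real.norm_eq_abs, Real.norm_eq_abs] at h3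
    rw [abs_of_pos hcpos] at h3
    nlinarith [abs_nonneg s]
  have key1 : z - boost τ₀ z = (s : ℂ) * (z ^ 2 - 1) / ((s : ℂ) * z + (c : ℂ)) := by
    rw [boost, ← hc, ← hsdef, eq_div_iff hd, sub_mul, div_mul_cancel₀ _ hd]
    ring
  set N : ℝ := ‖(s : ℂ) * z + (c : ℂ)‖ ^ 2 with hN
  have hNpos : 0 < N := by
    have : ‖(s : ℂ) * z + (c : ℂ)‖ ≠ 0 := by
      simpa using hd
    positivity
  have key1' : ‖z - boost τ₀ z‖ ^ 2
      = s ^ 2 * ‖z ^ 2 - 1‖ ^ 2 / N := by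
    rw [key1, norm_div, norm_mul, Complex.norm_real, Real.norm_eq_abs, div_pow, mul_pow, sq_abs]
  have key2 : 1 - ‖boost τ₀ z‖ ^ 2 = (1 - ‖z‖ ^ 2) / N := by
    have hb : ‖boost τ₀ z‖ ^ 2
        = Complex.normSq ((c : ℂ) * z + (s : ℂ)) / N := by
      rw [boost, ← hc, ← hsdef, norm_div, div_pow, Complex.sq_norm, hN, Complex.sq_norm]
    have hNn : N = Complex.normSq ((s : ℂ) * z + (c : ℂ)) := by
      rw [hN, Complex.sq_norm]
    have hzsq : ‖z‖ ^ 2 = Complex.normSq z := Complex.sq_norm z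
    have hN0 : Complex.normSq ((s : ℂ) * z + (c : ℂ)) ≠ 0 := by
      rw [← hNn]; exact ne_of_gt hNpos
    have hdiff : Complex.normSq ((s : ℂ) * z + (c : ℂ))
        - Complex.normSq ((c : ℂ) * z + (s : ℂ)) = 1 - Complex.normSq z := by
      simp only [Complex.normSq_apply, Complex.add_re, Complex.add_im, Complex.mul_re,
        Complex.mul_im, Complex.ofReal_re, Complex.ofReal_im]
      linear_combination (1 - z.re * z.re - z.im * z.im) * hcs
    rw [hb, hzsq, hNn, eq_div_iff hN0, sub_mul, div_mul_cancel₀ _ hN0, one_mul]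
    linarith [hdiff]
  have h1z : 0 < 1 - ‖z‖ ^ 2 := by nlinarith
  have harg : 1 + 2 * ‖z - boost τ₀ z‖ ^ 2 /
      ((1 - ‖z‖ ^ 2) * (1 - ‖boost τ₀ z‖ ^ 2))
      = 1 + 2 * (‖z ^ 2 - 1‖ ^ 2 / (1 - ‖z‖ ^ 2) ^ 2) * s ^ 2 := by
    rw [key1', key2]
    field_simp
  have hge : (1:ℝ) ≤ 1 + 2 * (‖z ^ 2 - 1‖ ^ 2 / (1 - ‖z‖ ^ 2) ^ 2) * s ^ 2 := by
    have h0 : 0 ≤ 2 * (‖z ^ 2 - 1‖ ^ 2 / (1 - ‖z‖ ^ 2) ^ 2) * s ^ 2 := by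
      positivity
    linarith
  rw [dH, harg, cosh_arcosh hge]
end

section
/- Spectral lower bound for the windowed Fourier transform: let ψ(t,·) = Σ_q ⟨ψ₀, ψ_q⟩ cos(qt) ψ_q be a solution of the wave equation on a compact manifold expanded in an orthonormal eigenbasis (Δψ_q = -q²ψ_q), and define Ψ_ω = ∫₀ᵀ ψ(t,·) e^{iωt} dt. Then for an eigenvalue q₀ > 0 with coefficient c = ⟨ψ₀, ψ_{q₀}⟩, the squared L² norm ‖Ψ_{q₀}‖² is at least c² (T²/4 - T/(2q₀)). -/
open MeasureTheory intervalIntegral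

lemma aux_integral (w T : ℝ) (hw : w ≠ 0) :
    (∫ t in (0 : ℝ)..T, (Real.cos (w * t) : ℂ) * Complex.exp (Complex.I * (w * t)))
      = T / 2 + (Complex.exp (2 * Complex.I * w * T) - 1) / (2 * (2 * Complex.I * w)) := by
  have hc : (2 * Complex.I * w : ℂ) ≠ 0 := by
    simp [Complex.I_ne_zero, Complex.ofReal_eq_zero, hw]
  have hfun : ∀ t : ℝ, (Real.cos (w * t) : ℂ) * Complex.exp (Complex.I * (w * t))
      = Complex.exp ((2 * Complex.I * w) * t) / 2 + 1 / 2 := by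
    intro t
    rw [Complex.ofReal_cos, Complex.cos, Complex.ofReal_mul]
    rw [show ((2 : ℂ) * Complex.I * w) * t = Complex.I * (w * t) + Complex.I * (w * t) by ring,
      Complex.exp_add]
    field_simp
    ring_nf
    rw [← Complex.exp_add]
    simp
  rw [intervalIntegral.integral_congr (fun t _ => hfun t)]
  rw [intervalIntegral.integral_add]
  · rw [intervalIntegral.integral_div, integral_exp_mul_complex hc]
    simp
    ring
  · exact ((Complex.continuous_exp.comp (continuous_const.mul Complex.continuous_ofReal)).div_const 2).intervalIntegrable 0 T
  · exact intervalIntegrable_const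

lemma aux_bound (w T : ℝ) (hw : 0 < w) (hT : 0 < T) :
    T ^ 2 / 4 - T / (2 * w) ≤
      ‖∫ t in (0 : ℝ)..T,
        (Real.cos (w * t) : ℂ) * Complex.exp (Complex.I * (w * t))‖ ^ 2 := by
  set I := ∫ t in (0 : ℝ)..T, (Real.cos (w * t) : ℂ) * Complex.exp (Complex.I * (w * t)) with hI
  have h0 : (0:ℝ) ≤ ‖I‖ := norm_nonneg _
  rcases le_or_gt (T / 2 - 1 / (2 * w)) 0 with hcase | hcase
  · have key : w * T ≤ 1 := by
      rw [sub_nonpos, div_le_div_iff₀ (by norm_num) (by positivity)] at hcase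
      nlinarith
    have h2 : T ^ 2 / 2 ≤ T / (2 * w) := by
      rw [div_le_div_iff₀ (by norm_num) (by positivity)]
      nlinarith
    nlinarith [sq_nonneg T, sq_nonneg (‖I‖)]
  · have habs : ‖(Complex.exp (2 * Complex.I * w * T) - 1)
        / (2 * (2 * Complex.I * w))‖ ≤ 1 / (2 * w) := by
      rw [norm_div]
      have h1 : ‖Complex.exp (2 * Complex.I * w * T) - 1‖ ≤ 2 := by
        have := norm_sub_le (Complex.exp (2 * Complex.I * w * T)) 1
        have he : ‖Complex.exp (2 * Complex.I * w * T)‖ = 1 := by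
          rw [Complex.norm_exp]
          simp
        simp [he] at this ⊢
        linarith
      have h2 : ‖2 * (2 * Complex.I * w)‖ = 4 * w := by
        simp [map_mul, Complex.norm_real, Real.norm_eq_abs, abs_of_pos hw]
        ring
      rw [h2]
      rw [div_le_div_iff₀ (by linarith) (by linarith)]
      nlinarith
    have hA : T / 2 - 1 / (2 * w) ≤ ‖I‖ := by
      rw [hI, aux_integral w T (ne_of_gt hw)]
      have := norm_sub_norm_le ((T:ℂ) / 2)
        (-((Complex.exp (2 * Complex.I * w * T) - 1) / (2 * (2 * Complex.I * w))))
      simp only [sub_neg_eq_add, norm_neg] at this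
      have hT2 : ‖(T:ℂ) / 2‖ = T / 2 := by
        rw [show ((T:ℂ)/2) = ((T/2 : ℝ) : ℂ) by push_cast; ring, Complex.norm_real, Real.norm_eq_abs,
          abs_of_pos (by linarith)]
      linarith [this, habs, hT2 ▸ this]
    have hb2 : (T / 2 - 1 / (2 * w)) ^ 2 ≤ ‖I‖ ^ 2 :=
      pow_le_pow_left₀ hcase.le hA 2
    have hexp : (T / 2 - 1 / (2 * w)) ^ 2 = T ^ 2 / 4 - T / (2 * w) + (1 / (2 * w)) ^ 2 := by
      field_simp
      ring
    linarith [sq_nonneg (1 / (2 * w))]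

/-- Spectral lower bound for the windowed Fourier transform of a wave on a
compact manifold.  Expanding the solution `ψ(t) = Σ_q ⟨ψ₀,ψ_q⟩ cos(qt) ψ_q` in
an orthonormal eigenbasis `(ψ_q)` of `-Δ_K` (eigenvalues `q²`), and setting
`Ψ_ω = ∫₀ᵀ ψ(t,·) e^{iωt} dt`, orthogonality gives
`‖Ψ_ω‖² = Σ_q ⟨ψ₀,ψ_q⟩² |∫₀ᵀ cos(qt) e^{iωt} dt|²`.  For an eigenvalue
`q₀ > 0` with coefficient `c = ⟨ψ₀, ψ_{q₀}⟩`, taking `ω = q₀`: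
`‖Ψ_{q₀}‖² ≥ c² (T²/4 - T/(2q₀))`. -/
theorem windowed_fourier_lower_bound
    {ι : Type*} (c : ι → ℝ) (q : ι → ℝ) (i₀ : ι) (hq₀ : 0 < q i₀)
    (T : ℝ) (hT : 0 < T)
    (hsum : Summable fun i =>
      c i ^ 2 * ‖∫ t in (0 : ℝ)..T,
        (Real.cos (q i * t) : ℂ) * Complex.exp (Complex.I * (q i₀ * t))‖ ^ 2) :
    c i₀ ^ 2 * (T ^ 2 / 4 - T / (2 * q i₀)) ≤
      ∑' i, c i ^ 2 * ‖∫ t in (0 : ℝ)..T,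
        (Real.cos (q i * t) : ℂ) * Complex.exp (Complex.I * (q i₀ * t))‖ ^ 2 := by
  have hterm : c i₀ ^ 2 * (T ^ 2 / 4 - T / (2 * q i₀)) ≤
      c i₀ ^ 2 * ‖∫ t in (0 : ℝ)..T,
        (Real.cos (q i₀ * t) : ℂ) * Complex.exp (Complex.I * (q i₀ * t))‖ ^ 2 :=
    mul_le_mul_of_nonneg_left (aux_bound (q i₀) T hq₀ hT) (sq_nonneg _)
  exact hterm.trans (hsum.le_tsum i₀ fun i _ => by positivity)
end
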